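/- For every t > 0, the matrix C(t) = (t/n)·𝟙𝟙ᵀ + Σ_{p=2}^n ((1 − e^{−2λ_p t})/(2λ_p))·u⁽ᵖ⁾(u⁽ᵖ⁾)ᵀ (the covariance matrix of the coupled drift-diffusion model at time t, with unit diffusion rate) has 𝟙/√n as an eigenvector with eigenvalue t, and t is strictly its largest eigenvalue: for each p ∈ {2,…,n} one has (1 − e^{−2λ_p t})/(2λ_p) < t. Hence the first principal component of the coupled DDM corresponds to the eigenvector 𝟙/√n. -/

import Mathlib

open Finset Matrix

/-- **First principal component of the coupled DDM.**
For every `t > 0`, the covariance matrix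
`C(t) = (t/n)·𝟙𝟙ᵀ + Σ_{p≠1} ((1 − e^{−2λ_p t})/(2λ_p))·u⁽ᵖ⁾(u⁽ᵖ⁾)ᵀ`
has `𝟙/√n` as an eigenvector with eigenvalue `t`, and for every `p ≠ 1` the coefficient
`(1 − e^{−2λ_p t})/(2λ_p)` is strictly less than `t`. -/
theorem coupledDDM_first_principal_component
    (n : ℕ) [NeZero n] (hn : 2 ≤ n)
    (L : Matrix (Fin n) (Fin n) ℝ)
    (hsymm : L.IsSymm) (hpsd : L.PosSemidef)
    (hL1 : L *ᵥ (fun _ => (1 : ℝ)) = 0)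
    (hker : ∀ v : Fin n → ℝ, L *ᵥ v = 0 → ∃ c : ℝ, v = fun _ => c)
    (lam : Fin n → ℝ) (u : Fin n → Fin n → ℝ)
    (hlam0 : lam 0 = 0)
    (hlampos : ∀ p : Fin n, p ≠ 0 → 0 < lam p)
    (hmono : Monotone lam)
    (heig : ∀ p : Fin n, L *ᵥ u p = lam p • u p)
    (horth : ∀ p q : Fin n, ∑ k, u p k * u q k = if p = q then (1 : ℝ) else 0)
    (hu0 : u 0 = fun _ => 1 / Real.sqrt n)
    (t : ℝ) (ht : 0 < t) :
    (Matrix.of fun i j =>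
        t / n + ∑ p ∈ Finset.univ.erase (0 : Fin n),
          (1 - Real.exp (-2 * lam p * t)) / (2 * lam p) * (u p i * u p j)) *ᵥ
      (fun _ => 1 / Real.sqrt n) = t • (fun _ => 1 / Real.sqrt n) ∧
    (∀ p : Fin n, p ≠ 0 → (1 - Real.exp (-2 * lam p * t)) / (2 * lam p) < t) := by
  have hnpos : (0:ℝ) < n := Nat.cast_pos.mpr (Nat.pos_of_ne_zero (NeZero.ne n))
  have hsq : Real.sqrt n ≠ 0 := ne_of_gt (Real.sqrt_pos.mpr hnpos)
  -- sum of components of u p is 0 for p ≠ 0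
  have hsum0 : ∀ p : Fin n, p ≠ 0 → ∑ k, u p k = 0 := by
    intro p hp
    have h := horth p 0
    rw [if_neg hp, hu0] at h
    have : (∑ k, u p k) * (1 / Real.sqrt n) = 0 := by
      rw [← h, Finset.sum_mul]
    rcases mul_eq_zero.mp this with h' | h'
    · exact h'
    · exact absurd h' (by simp [hsq])
  constructor
  · funext i
    simp only [mulVec, dotProduct, Pi.smul_apply, smul_eq_mul, Matrix.of_apply]
    have : ∀ j : Fin n, (t / n + ∑ p ∈ Finset.univ.erase (0 : Fin n),
          (1 - Real.exp (-2 * lam p * t)) / (2 * lam p) * (u p i * u p j)) * (1 / Real.sqrt n)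
        = t / n * (1 / Real.sqrt n) + ∑ p ∈ Finset.univ.erase (0 : Fin n),
          (1 - Real.exp (-2 * lam p * t)) / (2 * lam p) * u p i * (1 / Real.sqrt n) * u p j := by
      intro j
      rw [add_mul, Finset.sum_mul]
      congr 1
      apply Finset.sum_congr rfl
      intro p _
      ring
    simp_rw [this]
    rw [Finset.sum_add_distrib, Finset.sum_const, Finset.sum_comm]
    have h2 : ∀ p ∈ Finset.univ.erase (0 : Fin n),
        ∑ j, (1 - Real.exp (-2 * lam p * t)) / (2 * lam p) * u p i * (1 / Real.sqrt n) * u p j = 0 := by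
      intro p hp
      rw [← Finset.mul_sum, hsum0 p (Finset.mem_erase.mp hp).1, mul_zero]
    rw [Finset.sum_eq_zero h2, add_zero, Finset.card_univ, Fintype.card_fin]
    field_simp
    have h1 := mul_inv_cancel₀ hsq
    have h3 := mul_inv_cancel₀ hnpos.ne'
    linear_combination (t * (n:ℝ) * (n:ℝ)⁻¹) * h1 + t * h3
  · intro p hp
    have hlp := hlampos p hp
    have hx : 0 < 2 * lam p * t := by positivity
    have key : 1 - Real.exp (-2 * lam p * t) < 2 * lam p * t := by
      have := Real.add_one_le_exp (-(2 * lam p * t))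
      have h2 : Real.exp (-(2 * lam p * t)) ≠ -(2*lam p*t) + 1 := by
        intro h
        have := Real.add_one_lt_exp (x := -(2*lam p * t)) (by nlinarith)
        linarith
      have : -(2*lam p*t) + 1 < Real.exp (-(2*lam p*t)) := lt_of_le_of_ne this (Ne.symm h2)
      rw [show -2 * lam p * t = -(2*lam p*t) by ring]
      linarith
    rw [div_lt_iff₀ (by positivity)]
    linarith [key]
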